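/- The operator J on ℋ_ℤ defined by J([s₁,s₂,…,s_k]) = [s₁−1,s₂,…,s_k] and J(1) = 0 is a derivation with respect to the extended shuffle product: J(a ⧢ b) = J(a) ⧢ b + a ⧢ J(b) for all a, b ∈ ℋ_ℤ. -/

import Mathlib

noncomputable section

/-- The vector space ℋ_ℤ with basis the symbols `[s₁,…,s_k]` (lists of integers),
the empty list being the unit `1`. -/
abbrev HZ : Type := List ℤ →₀ ℚ

/-- The basis symbol `[s₁,…,s_k]`. -/
def bs (l : List ℤ) : HZ := Finsupp.single l 1

/-- Linear extension of a map defined on basis symbols. -/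
def hlift (f : List ℤ → HZ) : HZ →ₗ[ℚ] HZ := Finsupp.lift HZ ℚ (List ℤ) f

/-- Prepending a `0` entry to every basis symbol. -/
def preZ : HZ →ₗ[ℚ] HZ := hlift fun l => bs (0 :: l)

/-- The operator `I` adding 1 to the first entry. -/
def Imap : HZ →ₗ[ℚ] HZ := hlift fun l =>
  match l with
  | [] => 0
  | s :: r => bs ((s + 1) :: r)

/-- The operator `J` subtracting 1 from the first entry, with `J(1) = 0`. -/
def Jmap : HZ →ₗ[ℚ] HZ := hlift fun l =>
  match l with
  | [] => 0
  | s :: r => bs ((s - 1) :: r)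

/-- The five-case recursion defining the extended shuffle product on ℋ_ℤ. -/
def IsExtShuffle (m : HZ →ₗ[ℚ] HZ →ₗ[ℚ] HZ) : Prop :=
  (∀ x, m (bs []) x = x) ∧
  (∀ x, m x (bs []) = x) ∧
  (∀ (s' : List ℤ) (t₁ : ℤ) (t' : List ℤ),
    m (bs (0 :: s')) (bs (t₁ :: t')) = preZ (m (bs s') (bs (t₁ :: t')))) ∧
  (∀ (s₁ : ℤ), 0 < s₁ → ∀ (s' t' : List ℤ),
    m (bs (s₁ :: s')) (bs (0 :: t')) = preZ (m (bs (s₁ :: s')) (bs t'))) ∧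
  (∀ (s₁ t₁ : ℤ), 0 < s₁ → 0 < t₁ → ∀ (s' t' : List ℤ),
    m (bs (s₁ :: s')) (bs (t₁ :: t')) =
      Imap (m (bs (s₁ :: s')) (bs ((t₁ - 1) :: t'))) +
      Imap (m (bs ((s₁ - 1) :: s')) (bs (t₁ :: t')))) ∧
  (∀ (s₁ t₁ : ℤ), 0 < s₁ → t₁ < 0 → ∀ (s' t' : List ℤ),
    m (bs (s₁ :: s')) (bs (t₁ :: t')) =
      Jmap (m (bs (s₁ :: s')) (bs ((t₁ + 1) :: t'))) -
      m (bs ((s₁ - 1) :: s')) (bs ((t₁ + 1) :: t'))) ∧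
  (∀ (s₁ : ℤ), s₁ < 0 → ∀ (t₁ : ℤ) (s' t' : List ℤ),
    m (bs (s₁ :: s')) (bs (t₁ :: t')) =
      Jmap (m (bs ((s₁ + 1) :: s')) (bs (t₁ :: t'))) -
      m (bs ((s₁ + 1) :: s')) (bs ((t₁ - 1) :: t')))

lemma hlift_bs (f : List ℤ → HZ) (l : List ℤ) : hlift f (bs l) = f l := by
  simp [hlift, bs, Finsupp.lift_apply, Finsupp.sum_single_index]

def Emap : HZ →ₗ[ℚ] HZ := hlift fun l => if l = [] then bs [] else 0

lemma Jmap_nil : Jmap (bs []) = 0 := hlift_bs _ _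
lemma Jmap_cons (s : ℤ) (r : List ℤ) : Jmap (bs (s :: r)) = bs ((s - 1) :: r) := hlift_bs _ _
lemma Imap_nil : Imap (bs []) = 0 := hlift_bs _ _
lemma Imap_cons (s : ℤ) (r : List ℤ) : Imap (bs (s :: r)) = bs ((s + 1) :: r) := hlift_bs _ _
lemma preZ_bs (l : List ℤ) : preZ (bs l) = bs (0 :: l) := hlift_bs _ _
lemma Emap_nil : Emap (bs []) = bs [] := by simp [Emap, hlift_bs]
lemma Emap_cons (s : ℤ) (r : List ℤ) : Emap (bs (s :: r)) = 0 := by simp [Emap, hlift_bs]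

lemma single_eq (l : List ℤ) (c : ℚ) : (Finsupp.single l c : HZ) = c • bs l := by
  simp [bs, Finsupp.smul_single]

lemma JI (x : HZ) : Jmap (Imap x) = x - Emap x := by
  induction x using Finsupp.induction_linear with
  | zero => simp
  | add f g hf hg => simp only [map_add, hf, hg]; abel
  | single l c =>
    rw [single_eq, map_smul, map_smul, map_smul, ← smul_sub]
    cases l with
    | nil => simp [Imap_nil, Emap_nil]
    | cons s r => simp [Imap_cons, Jmap_cons, Emap_cons]

lemma E_preZ (x : HZ) : Emap (preZ x) = 0 := by
  induction x using Finsupp.induction_linear with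
  | zero => simp
  | add f g hf hg => simp [map_add, hf, hg]
  | single l c => rw [single_eq, map_smul, map_smul]; simp [preZ_bs, Emap_cons]

lemma E_Imap (x : HZ) : Emap (Imap x) = 0 := by
  induction x using Finsupp.induction_linear with
  | zero => simp
  | add f g hf hg => simp [map_add, hf, hg]
  | single l c =>
    rw [single_eq, map_smul, map_smul]
    cases l with
    | nil => simp [Imap_nil]
    | cons s r => simp [Imap_cons, Emap_cons]

lemma E_Jmap (x : HZ) : Emap (Jmap x) = 0 := by
  induction x using Finsupp.induction_linear with
  | zero => simp
  | add f g hf hg => simp [map_add, hf, hg]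
  | single l c =>
    rw [single_eq, map_smul, map_smul]
    cases l with
    | nil => simp [Jmap_nil]
    | cons s r => simp [Jmap_cons, Emap_cons]

lemma E_vanish0 (m : HZ →ₗ[ℚ] HZ →ₗ[ℚ] HZ) (hm : IsExtShuffle m) :
    ∀ n : ℕ, ∀ s₁ t₁ : ℤ, ∀ s' t' : List ℤ, 0 ≤ s₁ → (-t₁).toNat ≤ n →
      Emap (m (bs (s₁ :: s')) (bs (t₁ :: t'))) = 0 := by
  obtain ⟨h1, h2, h3, h4, h5, h6, h7⟩ := hm
  intro n
  induction n with
  | zero =>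
    intro s₁ t₁ s' t' hs ht
    rcases hs.eq_or_lt with rfl | hs'
    · rw [h3]; exact E_preZ _
    · rcases lt_trichotomy t₁ 0 with ht' | rfl | ht'
      · omega
      · rw [h4 s₁ hs']; exact E_preZ _
      · rw [h5 s₁ t₁ hs' ht', map_add, E_Imap, E_Imap, add_zero]
  | succ n IH =>
    intro s₁ t₁ s' t' hs ht
    rcases hs.eq_or_lt with rfl | hs'
    · rw [h3]; exact E_preZ _
    · rcases lt_trichotomy t₁ 0 with ht' | rfl | ht'
      · rw [h6 s₁ t₁ hs' ht', map_sub, E_Jmap, zero_sub,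
          IH (s₁ - 1) (t₁ + 1) s' t' (by omega) (by omega), neg_zero]
      · rw [h4 s₁ hs']; exact E_preZ _
      · rw [h5 s₁ t₁ hs' ht', map_add, E_Imap, E_Imap, add_zero]

lemma E_vanish (m : HZ →ₗ[ℚ] HZ →ₗ[ℚ] HZ) (hm : IsExtShuffle m)
    (s₁ t₁ : ℤ) (s' t' : List ℤ) :
    Emap (m (bs (s₁ :: s')) (bs (t₁ :: t'))) = 0 := by
  obtain ⟨h1, h2, h3, h4, h5, h6, h7⟩ := hm
  suffices h : ∀ n : ℕ, ∀ s₁ t₁ : ℤ, ∀ s' t' : List ℤ, (-s₁).toNat ≤ n →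
      Emap (m (bs (s₁ :: s')) (bs (t₁ :: t'))) = 0 from
    h (-s₁).toNat s₁ t₁ s' t' le_rfl
  intro n
  induction n with
  | zero =>
    intro s₁ t₁ s' t' hs
    exact E_vanish0 m ⟨h1, h2, h3, h4, h5, h6, h7⟩ (-t₁).toNat s₁ t₁ s' t' (by omega) le_rfl
  | succ n IH =>
    intro s₁ t₁ s' t' hs
    rcases le_or_gt 0 s₁ with hs' | hs'
    · exact E_vanish0 m ⟨h1, h2, h3, h4, h5, h6, h7⟩ (-t₁).toNat s₁ t₁ s' t' hs' le_rfl
    · rw [h7 s₁ hs' t₁, map_sub, E_Jmap, zero_sub,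
        IH (s₁ + 1) (t₁ - 1) s' t' (by omega), neg_zero]

lemma deriv_basis (m : HZ →ₗ[ℚ] HZ →ₗ[ℚ] HZ) (hm : IsExtShuffle m) :
    ∀ s t : List ℤ, Jmap (m (bs s) (bs t)) = m (Jmap (bs s)) (bs t) + m (bs s) (Jmap (bs t)) := by
  obtain ⟨h1, h2, h3, h4, h5, h6, h7⟩ := hm
  intro s t
  cases s with
  | nil =>
    rw [h1, Jmap_nil, map_zero, LinearMap.zero_apply, zero_add, h1]
  | cons s₁ s' =>
    cases t with
    | nil => rw [h2, Jmap_nil, map_zero, h2, add_zero]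
    | cons t₁ t' =>
      rw [Jmap_cons, Jmap_cons]
      rcases le_or_gt s₁ 0 with hs | hs
      · rw [h7 (s₁ - 1) (by omega) t₁ s' t', show s₁ - 1 + 1 = s₁ by ring]
        abel
      · rcases le_or_gt t₁ 0 with ht | ht
        · rw [h6 s₁ (t₁ - 1) hs (by omega) s' t', show t₁ - 1 + 1 = t₁ by ring]
          abel
        · rw [h5 s₁ t₁ hs ht s' t', map_add, JI, JI,
            E_vanish m ⟨h1, h2, h3, h4, h5, h6, h7⟩,
            E_vanish m ⟨h1, h2, h3, h4, h5, h6, h7⟩, sub_zero, sub_zero]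
          abel

/-- `J` is a derivation for the extended shuffle product. -/
theorem Jmap_derivation (m : HZ →ₗ[ℚ] HZ →ₗ[ℚ] HZ) (hm : IsExtShuffle m) :
    ∀ a b : HZ, Jmap (m a b) = m (Jmap a) b + m a (Jmap b) := by
  have key := deriv_basis m hm
  intro a b
  induction a using Finsupp.induction_linear with
  | zero => simp
  | add f g hf hg => simp only [map_add, LinearMap.add_apply]; rw [hf, hg]; abel
  | single l c =>
    induction b using Finsupp.induction_linear with
    | zero => simp
    | add f g hf hg => simp only [map_add]; rw [hf, hg]; abel
    | single l' c' =>
      rw [single_eq l c, single_eq l' c']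
      simp only [map_smul, LinearMap.smul_apply, key l l', smul_add]
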